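/- Let H be a hypergraph, x ∈ V(H), and T ⊆ V(H) with x ∉ T. Then T ∪ {x} is a minimal transversal of H if and only if T is a minimal transversal of H \ H(x) and T is not a transversal of H. -/

import Mathlib

variable {α : Type*} [DecidableEq α]

/-- The vertex set `V(H)` of a hypergraph `H`: the union of its hyperedges. -/
def verts (H : Finset (Finset α)) : Finset α := H.sup id

/-- `H(S)`: the set of hyperedges of `H` meeting `S`. -/
def edgesMeeting (H : Finset (Finset α)) (S : Finset α) : Finset (Finset α) :=
  H.filter fun e => (e ∩ S).Nonempty

/-- `T` is a transversal of `H`: `T ⊆ V(H)` and `T` meets every hyperedge. -/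
def IsTransversal (H : Finset (Finset α)) (T : Finset α) : Prop :=
  T ⊆ verts H ∧ ∀ e ∈ H, (T ∩ e).Nonempty

/-- `tr H`: the set of transversals of `H`. -/
def tr (H : Finset (Finset α)) : Finset (Finset α) :=
  (verts H).powerset.filter fun T => ∀ e ∈ H, (T ∩ e).Nonempty

/-- `mtr H`: the set of minimal transversals of `H`. -/
def mtr (H : Finset (Finset α)) : Finset (Finset α) :=
  (tr H).filter fun T => ∀ x ∈ T, T.erase x ∉ tr H

/-- `T` is a `B`-blocked transversal of `H'`: a transversal of `H'` such that every `x ∈ T`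
has a private hyperedge in `H' \ H'(B)`. -/
def IsBlockedTr (B : Finset α) (H' : Finset (Finset α)) (T : Finset α) : Prop :=
  IsTransversal H' T ∧ ∀ x ∈ T, ∃ e ∈ H' \ edgesMeeting H' B, e ∩ T = {x}

/-- `btr_B(H')`: the set of `B`-blocked transversals of `H'`. -/
def btr (B : Finset α) (H' : Finset (Finset α)) : Finset (Finset α) :=
  (tr H').filter fun T => ∀ x ∈ T, ∃ e ∈ H' \ edgesMeeting H' B, e ∩ T = {x}

/-- `btr_B(H', S)`: the `B`-blocked transversals of `H'` included in `S`. -/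
def btrS (B : Finset α) (H' : Finset (Finset α)) (S : Finset α) : Finset (Finset α) :=
  (btr B H').filter fun T => T ⊆ S

lemma mem_tr_iff {H : Finset (Finset α)} {T : Finset α} :
    T ∈ tr H ↔ T ⊆ verts H ∧ ∀ e ∈ H, (T ∩ e).Nonempty := by
  simp [tr, Finset.mem_filter, Finset.mem_powerset, and_assoc]

lemma mem_mtr_iff {H : Finset (Finset α)} {T : Finset α} :
    T ∈ mtr H ↔ T ∈ tr H ∧ ∀ x ∈ T, T.erase x ∉ tr H := by
  simp [mtr, Finset.mem_filter]

lemma mem_diffx {H : Finset (Finset α)} {x : α} {e : Finset α} :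
    e ∈ H \ edgesMeeting H {x} ↔ e ∈ H ∧ x ∉ e := by
  simp only [Finset.mem_sdiff, edgesMeeting, Finset.mem_filter]
  simp only [Finset.Nonempty, Finset.mem_inter, Finset.mem_singleton]
  aesop

lemma mem_verts_iff {H : Finset (Finset α)} {a : α} :
    a ∈ verts H ↔ ∃ e ∈ H, a ∈ e := by
  simp [verts, Finset.mem_sup]


/-- Let `H` be a hypergraph, `x ∈ V(H)` and `T ⊆ V(H)` with `x ∉ T`. Then `T ∪ {x}` is a
minimal transversal of `H` iff `T` is a minimal transversal of `H \ H(x)` and `T` is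
not a transversal of `H`. -/
theorem insert_mem_mtr_iff (H : Finset (Finset α)) (x : α) (hx : x ∈ verts H)
    (T : Finset α) (hT : T ⊆ verts H) (hxT : x ∉ T) :
    insert x T ∈ mtr H ↔ T ∈ mtr (H \ edgesMeeting H {x}) ∧ T ∉ tr H := by
  set H' := H \ edgesMeeting H {x} with hH'
  have hins_erase : ∀ y ∈ T, (insert x T).erase y = insert x (T.erase y) := by
    intro y hy
    have hyx : y ≠ x := fun h => hxT (h ▸ hy)
    rw [Finset.erase_insert_of_ne hyx.symm]
  constructor
  · rintro h
    rw [mem_mtr_iff, mem_tr_iff] at h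
    obtain ⟨⟨hsub, hmeet⟩, hmin⟩ := h
    -- private edges
    have priv : ∀ y ∈ T, ∃ e ∈ H, x ∉ e ∧ y ∈ e := by
      intro y hy
      have h1 := hmin y (Finset.mem_insert_of_mem hy)
      rw [mem_tr_iff] at h1
      push_neg at h1
      obtain ⟨e, he, hemp⟩ := h1 ((Finset.erase_subset _ _).trans hsub)
      have hyx : y ≠ x := fun h => hxT (h ▸ hy)
      have hxe : x ∉ e := by
        intro hxe
        have : x ∈ (insert x T).erase y ∩ e :=
          Finset.mem_inter.2 ⟨Finset.mem_erase.2 ⟨hyx.symm, Finset.mem_insert_self _ _⟩, hxe⟩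
        simp [hemp] at this
      have hye : y ∈ e := by
        obtain ⟨z, hz⟩ := hmeet e he
        obtain ⟨hz1, hz2⟩ := Finset.mem_inter.1 hz
        by_contra hye
        have : z ∈ (insert x T).erase y ∩ e := by
          refine Finset.mem_inter.2 ⟨Finset.mem_erase.2 ⟨?_, hz1⟩, hz2⟩
          rintro rfl; exact hye hz2
        simp [hemp] at this
      exact ⟨e, he, hxe, hye⟩
    have hTsub' : T ⊆ verts H' := by
      intro y hy
      obtain ⟨e, he, hxe, hye⟩ := priv y hy
      exact mem_verts_iff.2 ⟨e, mem_diffx.2 ⟨he, hxe⟩, hye⟩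
    have hTmeet' : ∀ e ∈ H', (T ∩ e).Nonempty := by
      intro e he
      obtain ⟨he', hxe⟩ := mem_diffx.1 he
      obtain ⟨z, hz⟩ := hmeet e he'
      obtain ⟨hz1, hz2⟩ := Finset.mem_inter.1 hz
      rcases Finset.mem_insert.1 hz1 with rfl | hz1
      · exact absurd hz2 hxe
      · exact ⟨z, Finset.mem_inter.2 ⟨hz1, hz2⟩⟩
    have hTnot : T ∉ tr H := by
      have := hmin x (Finset.mem_insert_self _ _)
      rwa [Finset.erase_insert hxT] at this
    refine ⟨mem_mtr_iff.2 ⟨mem_tr_iff.2 ⟨hTsub', hTmeet'⟩, ?_⟩, hTnot⟩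
    intro y hy hcon
    rw [mem_tr_iff] at hcon
    obtain ⟨hcsub, hcmeet⟩ := hcon
    apply hmin y (Finset.mem_insert_of_mem hy)
    rw [hins_erase y hy, mem_tr_iff]
    constructor
    · exact Finset.insert_subset hx (((Finset.erase_subset _ _).trans hT))
    · intro e he
      by_cases hxe : x ∈ e
      · exact ⟨x, Finset.mem_inter.2 ⟨Finset.mem_insert_self _ _, hxe⟩⟩
      · obtain ⟨z, hz⟩ := hcmeet e (mem_diffx.2 ⟨he, hxe⟩)
        obtain ⟨hz1, hz2⟩ := Finset.mem_inter.1 hz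
        exact ⟨z, Finset.mem_inter.2 ⟨Finset.mem_insert_of_mem hz1, hz2⟩⟩
  · rintro ⟨hTm, hTnot⟩
    rw [mem_mtr_iff, mem_tr_iff] at hTm
    obtain ⟨⟨hsub', hmeet'⟩, hmin'⟩ := hTm
    rw [mem_mtr_iff, mem_tr_iff]
    refine ⟨⟨Finset.insert_subset hx hT, ?_⟩, ?_⟩
    · intro e he
      by_cases hxe : x ∈ e
      · exact ⟨x, Finset.mem_inter.2 ⟨Finset.mem_insert_self _ _, hxe⟩⟩
      · obtain ⟨z, hz⟩ := hmeet' e (mem_diffx.2 ⟨he, hxe⟩)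
        obtain ⟨hz1, hz2⟩ := Finset.mem_inter.1 hz
        exact ⟨z, Finset.mem_inter.2 ⟨Finset.mem_insert_of_mem hz1, hz2⟩⟩
    · intro y hy
      rcases Finset.mem_insert.1 hy with rfl | hy
      · rwa [Finset.erase_insert hxT]
      · rw [hins_erase y hy]
        intro hcon
        rw [mem_tr_iff] at hcon
        obtain ⟨hcsub, hcmeet⟩ := hcon
        apply hmin' y hy
        rw [mem_tr_iff]
        refine ⟨(Finset.erase_subset _ _).trans hsub', ?_⟩
        intro e he
        obtain ⟨he', hxe⟩ := mem_diffx.1 he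
        obtain ⟨z, hz⟩ := hcmeet e he'
        obtain ⟨hz1, hz2⟩ := Finset.mem_inter.1 hz
        rcases Finset.mem_insert.1 hz1 with rfl | hz1
        · exact absurd hz2 hxe
        · exact ⟨z, Finset.mem_inter.2 ⟨hz1, hz2⟩⟩
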